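/- Fix n ≥ 2 and a symmetric nonnegative weight function g on pairs of states with maximum capacity C (bottleneck capacity of the weighted complete graph). Let p, p' be probability distributions on {1,…,n} with min_i min{p_i, p'_i} > m for some m ≥ 0. Then there exists a finite sequence of 'elementary moves', each transferring some amount Δ > 0 of probability between two states a, b with g(a,b) ≥ C, transforming p into p', such that at every intermediate distribution r in the sequence, r_i ≥ min{p_i, p'_i} > m for all i. -/

import Mathlib

open Finset

/-- The capacity of a path `x 0 → x 1 → ⋯ → x m` (with `m ≥ 1` steps) under edge
weights `g`: the minimum edge weight along the path. -/
noncomputable def pathCapacity {n : ℕ} (g : Fin n → Fin n → ℝ) (m : ℕ)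
    (x : ℕ → Fin n) : ℝ :=
  sInf {y : ℝ | ∃ k < m, y = g (x k) (x (k + 1))}

/-- The maximum (bottleneck) capacity of the weighted complete graph on `Fin n`. -/
noncomputable def maxCapacity {n : ℕ} (g : Fin n → Fin n → ℝ) : ℝ :=
  sInf {y : ℝ | ∃ i j : Fin n, i ≠ j ∧
    y = sSup {c : ℝ | ∃ m : ℕ, 1 ≤ m ∧ ∃ x : ℕ → Fin n,
      x 0 = i ∧ x m = j ∧ c = pathCapacity g m x}}

/-- An elementary move `(a, b, Δ)` transfers `Δ` of probability from state `a`
to state `b`. -/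
noncomputable def applyMove {n : ℕ} (r : Fin n → ℝ) (mv : Fin n × Fin n × ℝ) :
    Fin n → ℝ :=
  fun i => r i + mv.2.2 * ((if i = mv.2.1 then (1:ℝ) else 0) - (if i = mv.1 then (1:ℝ) else 0))

section A
variable {n : ℕ} (g : Fin n → Fin n → ℝ)

def edgeSet (m : ℕ) (x : ℕ → Fin n) : Set ℝ := {y : ℝ | ∃ k < m, y = g (x k) (x (k + 1))}

lemma edgeSet_sub (m : ℕ) (x : ℕ → Fin n) :
    edgeSet g m x ⊆ Set.range (fun pq : Fin n × Fin n => g pq.1 pq.2) := by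
  rintro y ⟨k, hk, rfl⟩; exact ⟨(x k, x (k+1)), rfl⟩

lemma edgeSet_fin (m : ℕ) (x : ℕ → Fin n) : (edgeSet g m x).Finite :=
  (Set.finite_range _).subset (edgeSet_sub g m x)

lemma edgeSet_ne (m : ℕ) (hm : 1 ≤ m) (x : ℕ → Fin n) : (edgeSet g m x).Nonempty :=
  ⟨g (x 0) (x 1), 0, hm, rfl⟩

lemma pathCapacity_mem (m : ℕ) (hm : 1 ≤ m) (x : ℕ → Fin n) :
    pathCapacity g m x ∈ edgeSet g m x :=
  (edgeSet_ne g m hm x).csInf_mem (edgeSet_fin g m x)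

lemma pathCapacity_le (m : ℕ) (x : ℕ → Fin n) (k : ℕ) (hk : k < m) :
    pathCapacity g m x ≤ g (x k) (x (k+1)) :=
  csInf_le (edgeSet_fin g m x).bddBelow ⟨k, hk, rfl⟩

def pathSet (i j : Fin n) : Set ℝ :=
  {c : ℝ | ∃ m : ℕ, 1 ≤ m ∧ ∃ x : ℕ → Fin n, x 0 = i ∧ x m = j ∧ c = pathCapacity g m x}

lemma pathSet_sub (i j : Fin n) :
    pathSet g i j ⊆ Set.range (fun pq : Fin n × Fin n => g pq.1 pq.2) := by
  rintro c ⟨m, hm, x, hx0, hxm, rfl⟩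
  exact edgeSet_sub g m x (pathCapacity_mem g m hm x)

lemma direct_mem (i j : Fin n) : g i j ∈ pathSet g i j := by
  refine ⟨1, le_refl 1, fun k => if k = 0 then i else j, by simp, by simp, ?_⟩
  have : edgeSet g 1 (fun k => if k = 0 then i else j) = {g i j} := by
    ext y
    constructor
    · rintro ⟨k, hk, rfl⟩
      interval_cases k
      simp
    · rintro rfl
      exact ⟨0, one_pos, by simp⟩
  rw [pathCapacity, show {y : ℝ | ∃ k < 1, y = g ((fun k => if k = 0 then i else j) k) ((fun k => if k = 0 then i else j) (k + 1))} = edgeSet g 1 (fun k => if k = 0 then i else j) from rfl, this, csInf_singleton]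

lemma pathSet_ne (i j : Fin n) : (pathSet g i j).Nonempty := ⟨g i j, direct_mem g i j⟩

lemma pathSet_fin (i j : Fin n) : (pathSet g i j).Finite :=
  (Set.finite_range _).subset (pathSet_sub g i j)

lemma exists_path (hnonneg : ∀ i j, 0 ≤ g i j) (i j : Fin n) (hij : i ≠ j) :
    ∃ m : ℕ, 1 ≤ m ∧ ∃ x : ℕ → Fin n, x 0 = i ∧ x m = j ∧
      ∀ k < m, maxCapacity g ≤ g (x k) (x (k + 1)) := by
  have hmem : sSup (pathSet g i j) ∈ pathSet g i j :=
    (pathSet_ne g i j).csSup_mem (pathSet_fin g i j)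
  obtain ⟨m, hm, x, hx0, hxm, hc⟩ := hmem
  refine ⟨m, hm, x, hx0, hxm, fun k hk => ?_⟩
  have hC : maxCapacity g ≤ sSup (pathSet g i j) := by
    apply csInf_le
    · refine ⟨0, fun y hy => ?_⟩
      obtain ⟨i', j', _, rfl⟩ := hy
      exact le_trans (hnonneg i' j')
        (le_csSup (pathSet_fin g i' j').bddAbove (direct_mem g i' j'))
    · exact ⟨i, j, hij, rfl⟩
  calc maxCapacity g ≤ sSup (pathSet g i j) := hC
    _ = pathCapacity g m x := hc
    _ ≤ g (x k) (x (k+1)) := pathCapacity_le g m x k hk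

end A

noncomputable def pathMoves {n : ℕ} (x : ℕ → Fin n) (Δ : ℝ) (m : ℕ) :
    List (Fin n × Fin n × ℝ) :=
  (List.range m).map (fun k => (x k, x (k+1), Δ))

lemma pathMoves_length {n : ℕ} (x : ℕ → Fin n) (Δ : ℝ) (m : ℕ) :
    (pathMoves x Δ m).length = m := by simp [pathMoves]

lemma pathMoves_take {n : ℕ} (x : ℕ → Fin n) (Δ : ℝ) (m k : ℕ) (hk : k ≤ m) :
    (pathMoves x Δ m).take k = pathMoves x Δ k := by
  simp [pathMoves, ← List.map_take, List.take_range, Nat.min_eq_left hk]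

lemma pathMoves_get {n : ℕ} (x : ℕ → Fin n) (Δ : ℝ) (m k : ℕ) (hk : k < (pathMoves x Δ m).length) :
    (pathMoves x Δ m).get ⟨k, hk⟩ = (x k, x (k+1), Δ) := by
  simp [pathMoves]

lemma foldl_pathMoves {n : ℕ} (x : ℕ → Fin n) (Δ : ℝ) (t : ℕ) (r : Fin n → ℝ) :
    (pathMoves x Δ t).foldl applyMove r
    = fun c => r c + Δ * ((if c = x t then (1:ℝ) else 0) - (if c = x 0 then (1:ℝ) else 0)) := by
  induction t with
  | zero => funext c; simp [pathMoves]
  | succ t ih =>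
    rw [pathMoves, List.range_succ, List.map_append, List.foldl_append, ← pathMoves, ih]
    funext c
    simp only [List.map_cons, List.map_nil, List.foldl_cons, List.foldl_nil, applyMove]
    by_cases h1 : c = x (t+1) <;> by_cases h2 : c = x t <;> by_cases h3 : c = x 0 <;>
      simp [h1, h2, h3] <;> ring

lemma exists_moves {n : ℕ} (g : Fin n → Fin n → ℝ) (p p' : Fin n → ℝ)
    (hp : ∀ i, 0 ≤ p i) (hp' : ∀ i, 0 ≤ p' i)
    (hpath : ∀ i j : Fin n, i ≠ j → ∃ m : ℕ, 1 ≤ m ∧ ∃ x : ℕ → Fin n,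
      x 0 = i ∧ x m = j ∧ ∀ k < m, maxCapacity g ≤ g (x k) (x (k + 1))) :
    ∀ N : ℕ, ∀ r : Fin n → ℝ,
      (Finset.univ.filter (fun k => r k ≠ p' k)).card ≤ N →
      (∑ i, r i) = (∑ i, p' i) → (∀ i, min (p i) (p' i) ≤ r i) →
      ∃ L : List (Fin n × Fin n × ℝ),
        L.foldl applyMove r = p' ∧
        (∀ k : ℕ, ∀ hk : k < L.length,
          0 < (L.get ⟨k, hk⟩).2.2 ∧
          maxCapacity g ≤ g (L.get ⟨k, hk⟩).1 (L.get ⟨k, hk⟩).2.1 ∧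
          (L.get ⟨k, hk⟩).2.2 ≤ ((L.take k).foldl applyMove r) (L.get ⟨k, hk⟩).1) ∧
        (∀ k : ℕ, k ≤ L.length → ∀ i,
          min (p i) (p' i) ≤ ((L.take k).foldl applyMove r) i) := by
  intro N
  induction N with
  | zero =>
    intro r hcard _ hr
    have hre : r = p' := by
      funext k
      by_contra hne
      have : k ∈ Finset.univ.filter (fun k => r k ≠ p' k) := by simp [hne]
      rw [Finset.card_eq_zero.mp (Nat.le_zero.mp hcard)] at this
      exact absurd this (Finset.notMem_empty k)
    exact ⟨[], hre, fun k hk => absurd hk (by simp), fun k hk i => by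
      simpa [Nat.le_zero.mp hk] using hr i⟩
  | succ N ih =>
    intro r hcard hsum hr
    by_cases h0 : (Finset.univ.filter (fun k => r k ≠ p' k)).card = 0
    · exact ih r (h0 ▸ Nat.zero_le N) hsum hr
    have hne : ∃ a, r a ≠ p' a := by
      by_contra h
      push_neg at h
      exact h0 (by simp [Finset.card_eq_zero, Finset.filter_eq_empty_iff, h])
    have hab : ∃ a b, p' a < r a ∧ r b < p' b := by
      obtain ⟨c, hc⟩ := hne
      rcases lt_or_gt_of_ne hc with h | h
      · by_contra hco
        push_neg at hco
        have hall : ∀ a, r a ≤ p' a := by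
          intro a
          by_contra hx
          push_neg at hx
          exact absurd (hco a c hx) (not_le.mpr h)
        have : (∑ i, r i) < ∑ i, p' i :=
          Finset.sum_lt_sum (fun i _ => hall i) ⟨c, Finset.mem_univ c, h⟩
        exact absurd hsum (ne_of_lt this)
      · by_contra hco
        push_neg at hco
        have hall : ∀ b, p' b ≤ r b := fun b => hco c b h
        have : (∑ i, p' i) < ∑ i, r i :=
          Finset.sum_lt_sum (fun i _ => hall i) ⟨c, Finset.mem_univ c, h⟩
        exact absurd hsum.symm (ne_of_lt this)
    obtain ⟨a, b, ha, hb⟩ := hab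
    have hanb : a ≠ b := fun h => by rw [h] at ha; exact absurd (ha.trans hb) (lt_irrefl _)
    set Δ : ℝ := min (r a - p' a) (p' b - r b) with hΔdef
    have hΔpos : 0 < Δ := lt_min (by linarith) (by linarith)
    have hΔa : Δ ≤ r a - p' a := min_le_left _ _
    have hΔb : Δ ≤ p' b - r b := min_le_right _ _
    obtain ⟨mlen, hm1, x, hx0, hxm, hedges⟩ := hpath a b hanb
    set L1 : List (Fin n × Fin n × ℝ) := pathMoves x Δ mlen with hL1def
    set r' : Fin n → ℝ :=
      fun c => r c + Δ * ((if c = b then (1:ℝ) else 0) - (if c = a then (1:ℝ) else 0)) with hr'def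
    have hfold1 : L1.foldl applyMove r = r' := by
      rw [hL1def, foldl_pathMoves, hx0, hxm]
    have hr'a : r' a = r a - Δ := by
      show r a + Δ * ((if a = b then (1:ℝ) else 0) - (if a = a then (1:ℝ) else 0)) = r a - Δ
      rw [if_neg hanb, if_pos rfl]; ring
    have hr'b : r' b = r b + Δ := by
      show r b + Δ * ((if b = b then (1:ℝ) else 0) - (if b = a then (1:ℝ) else 0)) = r b + Δ
      rw [if_pos rfl, if_neg hanb.symm]; ring
    have hr'other : ∀ c, c ≠ a → c ≠ b → r' c = r c := by
      intro c h1 h2; simp [hr'def, h1, h2]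
    have hr'min : ∀ i, min (p i) (p' i) ≤ r' i := by
      intro i
      by_cases h1 : i = a
      · subst h1; rw [hr'a]
        calc min (p i) (p' i) ≤ p' i := min_le_right _ _
          _ ≤ r i - Δ := by linarith
      · by_cases h2 : i = b
        · subst h2; rw [hr'b]; linarith [hr i, hΔpos.le]
        · rw [hr'other i h1 h2]; exact hr i
    have hr'sum : (∑ i, r' i) = ∑ i, p' i := by
      rw [hr'def]
      rw [Finset.sum_add_distrib, ← Finset.mul_sum, Finset.sum_sub_distrib]
      simp [hsum]
    have hsub : Finset.univ.filter (fun k => r' k ≠ p' k) ⊆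
        Finset.univ.filter (fun k => r k ≠ p' k) := by
      intro k hk
      simp only [Finset.mem_filter, Finset.mem_univ, true_and] at hk ⊢
      by_cases h1 : k = a
      · subst h1; exact ne_of_gt ha
      · by_cases h2 : k = b
        · subst h2; exact ne_of_lt hb
        · rwa [hr'other k h1 h2] at hk
    have hcard' : (Finset.univ.filter (fun k => r' k ≠ p' k)).card ≤ N := by
      have hss : Finset.univ.filter (fun k => r' k ≠ p' k) ⊂
          Finset.univ.filter (fun k => r k ≠ p' k) := by
        rcases le_total (r a - p' a) (p' b - r b) with hc | hc
        · refine ⟨hsub, fun hsup => ?_⟩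
          have hmem : a ∈ Finset.univ.filter (fun k => r k ≠ p' k) := by
            simp [ne_of_gt ha]
          have := hsup hmem
          simp only [Finset.mem_filter, Finset.mem_univ, true_and] at this
          apply this
          rw [hr'a, hΔdef, min_eq_left hc]; ring
        · refine ⟨hsub, fun hsup => ?_⟩
          have hmem : b ∈ Finset.univ.filter (fun k => r k ≠ p' k) := by
            simp [ne_of_lt hb]
          have := hsup hmem
          simp only [Finset.mem_filter, Finset.mem_univ, true_and] at this
          apply this
          rw [hr'b, hΔdef, min_eq_right hc]; ring
      have := Finset.card_lt_card hss
      omega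
    obtain ⟨L2, hL2fold, hL2move, hL2int⟩ := ih r' hcard' hr'sum hr'min
    refine ⟨L1 ++ L2, ?_, ?_, ?_⟩
    · rw [List.foldl_append, hfold1, hL2fold]
    · intro k hk
      have hL1len : L1.length = mlen := pathMoves_length x Δ mlen
      by_cases hkm : k < mlen
      · have hkL1 : k < L1.length := by omega
        have hget : (L1 ++ L2).get ⟨k, hk⟩ = (x k, x (k+1), Δ) := by
          rw [List.get_eq_getElem, List.getElem_append_left hkL1,
            ← List.get_eq_getElem (l := L1) (i := ⟨k, hkL1⟩)]
          exact pathMoves_get x Δ mlen k hkL1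
        rw [hget]
        refine ⟨hΔpos, hedges k hkm, ?_⟩
        have htake : (L1 ++ L2).take k = pathMoves x Δ k := by
          rw [List.take_append_of_le_length (by omega), hL1def,
            pathMoves_take x Δ mlen k hkm.le]
        rw [htake, foldl_pathMoves]
        show Δ ≤ r (x k) + Δ * ((if x k = x k then (1:ℝ) else 0) - if x k = x 0 then 1 else 0)
        by_cases hxk : x k = x 0
        · have hxa : x k = a := hxk.trans hx0
          rw [if_pos rfl, if_pos hxk, hxa]
          have := hp' a
          linarith
        · rw [if_pos rfl, if_neg hxk]
          have h1 : 0 ≤ r (x k) := le_trans (le_min (hp _) (hp' _)) (hr _)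
          linarith
      · push_neg at hkm
        have hkL1 : L1.length ≤ k := by omega
        have hk2 : k - L1.length < L2.length := by
          have := hk; rw [List.length_append] at this; omega
        have hget : (L1 ++ L2).get ⟨k, hk⟩ = L2.get ⟨k - L1.length, hk2⟩ := by
          rw [List.get_eq_getElem, List.get_eq_getElem, List.getElem_append_right hkL1]
        have htake : (L1 ++ L2).take k = L1 ++ L2.take (k - L1.length) := by
          rw [List.take_append, List.take_of_length_le hkL1]
        rw [hget, htake, List.foldl_append, hfold1]
        exact hL2move (k - L1.length) hk2
    · intro k hk i
      have hL1len : L1.length = mlen := pathMoves_length x Δ mlen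
      by_cases hkm : k ≤ mlen
      · have htake : (L1 ++ L2).take k = pathMoves x Δ k := by
          rw [List.take_append_of_le_length (by omega), hL1def, pathMoves_take x Δ mlen k hkm]
        rw [htake, foldl_pathMoves]
        show min (p i) (p' i) ≤ r i + Δ * ((if i = x k then (1:ℝ) else 0) - if i = x 0 then 1 else 0)
        by_cases h2 : i = x 0
        · have hia : i = a := h2.trans hx0
          by_cases h1 : i = x k
          · rw [if_pos h1, if_pos h2]
            have := hr i; linarith
          · rw [if_neg h1, if_pos h2]
            calc min (p i) (p' i) ≤ p' i := min_le_right _ _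
              _ ≤ r i + Δ * (0 - 1) := by rw [hia]; linarith
        · by_cases h1 : i = x k
          · rw [if_pos h1, if_neg h2]
            have := hr i; have := hΔpos.le; linarith
          · rw [if_neg h1, if_neg h2]
            have := hr i; linarith
      · push_neg at hkm
        have hkL1 : L1.length ≤ k := by omega
        have htake : (L1 ++ L2).take k = L1 ++ L2.take (k - L1.length) := by
          rw [List.take_append, List.take_of_length_le hkL1]
        rw [htake, List.foldl_append, hfold1]
        refine hL2int (k - L1.length) ?_ i
        rw [List.length_append] at hk; omega

theorem stmt_19 (n : ℕ) (hn : 2 ≤ n)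
    (g : Fin n → Fin n → ℝ) (hsym : ∀ i j, g i j = g j i) (hnonneg : ∀ i j, 0 ≤ g i j)
    (p p' : Fin n → ℝ)
    (hp : ∀ i, 0 ≤ p i) (hp1 : ∑ i : Fin n, p i = 1)
    (hp' : ∀ i, 0 ≤ p' i) (hp'1 : ∑ i : Fin n, p' i = 1)
    (m : ℝ) (hm : 0 ≤ m) (hmin : ∀ i, m < min (p i) (p' i)) :
    ∃ L : List (Fin n × Fin n × ℝ),
      -- the sequence of elementary moves transforms p into p'
      L.foldl applyMove p = p' ∧
      -- each move transfers a positive amount Δ between states a, b with g(a,b) ≥ C,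
      -- and transfers no more than the current probability of the source state
      (∀ k : ℕ, ∀ hk : k < L.length,
        0 < (L.get ⟨k, hk⟩).2.2 ∧
        maxCapacity g ≤ g (L.get ⟨k, hk⟩).1 (L.get ⟨k, hk⟩).2.1 ∧
        (L.get ⟨k, hk⟩).2.2 ≤ ((L.take k).foldl applyMove p) (L.get ⟨k, hk⟩).1) ∧
      -- every intermediate distribution stays above min{p_i, p'_i} > m
      (∀ k : ℕ, k ≤ L.length → ∀ i,
        min (p i) (p' i) ≤ ((L.take k).foldl applyMove p) i) := by
  exact exists_moves g p p' hp hp' (fun i j hij => exists_path g hnonneg i j hij)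
    (Finset.univ.filter (fun k => p k ≠ p' k)).card p (le_refl _)
    (hp1.trans hp'1.symm) (fun i => min_le_left _ _)
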